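/- Let P be a framed polytope of dimension d and let F₁,…,F_m be faces in the (d−1)-target t_{d−1}(P) (the facets whose outer normal evaluates positively on v_d). Define λ_i = ⟨η_i, v_{d−1}⟩ where η_i is the normal covector of F_i normalized so that ⟨η_i, v_d⟩ = 1. If F₁ and F₂ are both in t_{d−1}(P) and the intersection F = F₁ ∩ F₂ is a (d−2)-face lying in the (d−2)-target of F₁ and the (d−2)-source of F₂, then λ₁ < λ₂. Consequently, the relation 't_{d−2}(F_i) ∩ s_{d−2}(F_j) ≠ ∅' on facets in the target is acyclic, and a framed polytope has no cellular (d−2)-loops supported on its target facets. -/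

import Mathlib

noncomputable section
open scoped Classical

/-- The ambient space `ℝ^d`. -/
abbrev Amb (d : ℕ) := Fin d → ℝ

variable {d : ℕ}

/-- The linear span of a subset of `ℝ^d`: the span of differences of its points. -/
def linSpan (F : Set (Amb d)) : Submodule ℝ (Amb d) :=
  Submodule.span ℝ {w | ∃ x ∈ F, ∃ y ∈ F, w = x - y}

/-- The dimension of a subset of `ℝ^d` (dimension of its affine span). -/
def fdim (F : Set (Amb d)) : ℕ := Module.finrank ℝ (linSpan F)

/-- `F` is a face of `P`: the maximal locus of a linear functional on `P`. -/
def IsFaceOf (P F : Set (Amb d)) : Prop :=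
  ∃ φ : Amb d →ₗ[ℝ] ℝ, F = {x ∈ P | ∀ y ∈ P, φ y ≤ φ x}

/-- `η` is a normal covector for the face `E` of `Q`: its maximal locus on `Q` is `E`. -/
def NormalOf (Q E : Set (Amb d)) (η : Amb d →ₗ[ℝ] ℝ) : Prop :=
  E = {x ∈ Q | ∀ y ∈ Q, η y ≤ η x}

/-- The `k`-th projection associated to a frame `B`: sends `B i` to `B i` for `i < k`
and to `0` for `i ≥ k`. -/
def proj (B : Module.Basis (Fin d) ℝ (Amb d)) (k : ℕ) : Amb d →ₗ[ℝ] Amb d :=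
  B.constr ℝ (fun i => if (i : ℕ) < k then B i else 0)

/-- The `(k+1)`-st frame vector `v_{k+1}` (0-indexed: `B k`). -/
def fvec (B : Module.Basis (Fin d) ℝ (Amb d)) (k : ℕ) : Amb d :=
  if h : k < d then B ⟨k, h⟩ else 0

/-- A frame `B` is `P`-admissible if for every (nonempty) `k`-face `F` of `P`, the
projection `π_k` restricts to a linear isomorphism on `Lin F` (equivalently, is
injective on `Lin F`, the dimensions being equal). -/
def Admissible (P : Set (Amb d)) (B : Module.Basis (Fin d) ℝ (Amb d)) : Prop :=
  ∀ F : Set (Amb d), IsFaceOf P F → F.Nonempty →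
    ∀ w ∈ linSpan F, proj B (fdim F) w = 0 → w = 0

/-- `w : Fin k → ℝ^d` represents the induced orientation of the face `F`:
each `w i = σ_k^F (v_{i+1})`, i.e. `w i ∈ Lin F` and `π_k (w i) = v_{i+1}`.
The induced orientation `β_F` is then (the class of) `w 0 ∧ ⋯ ∧ w (k-1)`. -/
def OriRep (B : Module.Basis (Fin d) ℝ (Amb d)) (F : Set (Amb d)) (k : ℕ)
    (w : Fin k → Amb d) : Prop :=
  ∀ i : Fin k, w i ∈ linSpan F ∧ proj B k (w i) = fvec B (i : ℕ)

/-- Two frames are `P`-equivalent if they induce the same `f`-orientation on every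
(nonempty) face of `P`: any representatives of the induced orientations are positive
multiples of each other in the exterior algebra. -/
def FrameEquiv (P : Set (Amb d)) (B B' : Module.Basis (Fin d) ℝ (Amb d)) : Prop :=
  ∀ F : Set (Amb d), IsFaceOf P F → F.Nonempty →
    ∀ w w' : Fin (fdim F) → Amb d, OriRep B F (fdim F) w → OriRep B' F (fdim F) w' →
      ∃ l : ℝ, 0 < l ∧
        ExteriorAlgebra.ιMulti ℝ (fdim F) w = l • ExteriorAlgebra.ιMulti ℝ (fdim F) w'

/-- `G` belongs to the `k`-target of the face `F`: `G` is a `k`-face of `F` whose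
projection `π_{k+1}(G)` is a facet of `π_{k+1}(F)` with a normal covector evaluating
positively on `v_{k+1}`. -/
def InKTarget (B : Module.Basis (Fin d) ℝ (Amb d)) (k : ℕ) (F G : Set (Amb d)) : Prop :=
  IsFaceOf F G ∧ G.Nonempty ∧ fdim G = k ∧
  ∃ η : Amb d →ₗ[ℝ] ℝ,
    NormalOf (proj B (k+1) '' F) (proj B (k+1) '' G) η ∧ 0 < η (fvec B k)

/-- `G` belongs to the `k`-source of the face `F`. -/
def InKSource (B : Module.Basis (Fin d) ℝ (Amb d)) (k : ℕ) (F G : Set (Amb d)) : Prop :=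
  IsFaceOf F G ∧ G.Nonempty ∧ fdim G = k ∧
  ∃ η : Amb d →ₗ[ℝ] ℝ,
    NormalOf (proj B (k+1) '' F) (proj B (k+1) '' G) η ∧ η (fvec B k) < 0

/-- `E` belongs to the target `t(F)` of the face `F` (the `(dim F - 1)`-target). -/
def InTarget (B : Module.Basis (Fin d) ℝ (Amb d)) (F E : Set (Amb d)) : Prop :=
  InKTarget B (fdim F - 1) F E

/-- `E` belongs to the source `s(F)` of the face `F`. -/
def InSource (B : Module.Basis (Fin d) ℝ (Amb d)) (F E : Set (Amb d)) : Prop :=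
  InKSource B (fdim F - 1) F E

/-- A cellular `k`-string in the framed polytope `(P,B)`: a sequence of faces of
dimension `> k` such that consecutive faces are glued along a common face in the
`k`-target of the first and the `k`-source of the second. -/
def IsCellString (B : Module.Basis (Fin d) ℝ (Amb d)) (P : Set (Amb d)) (k : ℕ) {m : ℕ}
    (Fs : Fin m → Set (Amb d)) : Prop :=
  (∀ i, IsFaceOf P (Fs i) ∧ k < fdim (Fs i)) ∧
  ∀ i : ℕ, ∀ h : i + 1 < m,
    ∃ G, InKTarget B k (Fs ⟨i, by omega⟩) G ∧ InKSource B k (Fs ⟨i+1, h⟩) G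


/-!
STATEMENT 17: for target facets `F₁, F₂` of a framed `d`-polytope with normal
covectors normalized by `⟨η_i, v_d⟩ = 1`, if `F₁ ∩ F₂` is a `(d−2)`-face lying in
the `(d−2)`-target of `F₁` and the `(d−2)`-source of `F₂`, then
`λ₁ = ⟨η₁, v_{d−1}⟩ < λ₂ = ⟨η₂, v_{d−1}⟩`; consequently there are no cellular
`(d−2)`-loops supported on the target facets.
-/
section Helpers
variable {d : ℕ}

lemma proj_basis (B : Module.Basis (Fin d) ℝ (Amb d)) (k : ℕ) (i : Fin d) :
    proj B k (B i) = if (i : ℕ) < k then B i else 0 := B.constr_basis ℝ _ _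

lemma proj_proj (B : Module.Basis (Fin d) ℝ (Amb d)) {j k : ℕ} (h : j ≤ k) (x : Amb d) :
    proj B j (proj B k x) = proj B j x := by
  have hc : (proj B j).comp (proj B k) = proj B j := by
    apply B.ext; intro i
    by_cases hik : (i : ℕ) < k
    · simp [LinearMap.comp_apply, proj_basis, hik]
    · have hij : ¬ (i : ℕ) < j := by omega
      simp [LinearMap.comp_apply, proj_basis, hik, hij]
  calc proj B j (proj B k x) = ((proj B j).comp (proj B k)) x := rfl
    _ = proj B j x := by rw [hc]

lemma proj_d_id (B : Module.Basis (Fin d) ℝ (Amb d)) : proj B d = LinearMap.id := by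
  apply B.ext; intro i; simp [proj_basis, i.isLt]

lemma linSpan_mono {F G : Set (Amb d)} (h : F ⊆ G) : linSpan F ≤ linSpan G :=
  Submodule.span_mono (by rintro w ⟨x, hx, y, hy, rfl⟩; exact ⟨x, h hx, y, h hy, rfl⟩)

lemma sub_mem_linSpan {F : Set (Amb d)} {x y : Amb d} (hx : x ∈ F) (hy : y ∈ F) :
    x - y ∈ linSpan F := Submodule.subset_span ⟨x, hx, y, hy, rfl⟩

lemma linSpan_image (f : Amb d →ₗ[ℝ] Amb d) (F : Set (Amb d)) :
    linSpan (f '' F) = (linSpan F).map f := by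
  unfold linSpan
  rw [← Submodule.span_image]
  congr 1
  ext w
  constructor
  · rintro ⟨x', ⟨x, hx, rfl⟩, y', ⟨y, hy, rfl⟩, rfl⟩
    exact ⟨x - y, ⟨x, hx, y, hy, rfl⟩, map_sub f x y⟩
  · rintro ⟨w', ⟨x, hx, y, hy, rfl⟩, rfl⟩
    exact ⟨f x, ⟨x, hx, rfl⟩, f y, ⟨y, hy, rfl⟩, map_sub f x y⟩

lemma finrank_map_of_injOn (f : Amb d →ₗ[ℝ] Amb d) (p : Submodule ℝ (Amb d))
    (hf : ∀ x ∈ p, f x = 0 → x = 0) :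
    Module.finrank ℝ (p.map f) = Module.finrank ℝ p := by
  have h1 : LinearMap.range (f.domRestrict p) = p.map f := by
    ext y
    simp [LinearMap.mem_range, Submodule.mem_map, LinearMap.domRestrict_apply]
  rw [← h1]
  apply LinearMap.finrank_range_of_inj
  rintro ⟨x, hx⟩ ⟨y, hy⟩ hxy
  have hz : x - y = 0 := hf _ (sub_mem hx hy) (by simpa [map_sub, sub_eq_zero] using hxy)
  exact Subtype.ext (sub_eq_zero.mp hz)

lemma NormalOf.subset {Q E : Set (Amb d)} {η : Amb d →ₗ[ℝ] ℝ} (h : NormalOf Q E η) :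
    E ⊆ Q := fun x hx => by rw [h] at hx; exact hx.1

lemma NormalOf.le {Q E : Set (Amb d)} {η : Amb d →ₗ[ℝ] ℝ} (h : NormalOf Q E η)
    {x y : Amb d} (hx : x ∈ E) (hy : y ∈ Q) : η y ≤ η x := by
  rw [h] at hx; exact hx.2 y hy

lemma NormalOf.vanish {Q E : Set (Amb d)} {η : Amb d →ₗ[ℝ] ℝ} (h : NormalOf Q E η)
    {w : Amb d} (hw : w ∈ linSpan E) : η w = 0 := by
  have hle : linSpan E ≤ LinearMap.ker η := by
    apply Submodule.span_le.2
    rintro w ⟨x, hx, y, hy, rfl⟩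
    have h1 : η y ≤ η x := h.le hx (h.subset hy)
    have h2 : η x ≤ η y := h.le hy (h.subset hx)
    simp [LinearMap.mem_ker, map_sub, le_antisymm h1 h2]
  exact hle hw

lemma NormalOf.strict {Q E : Set (Amb d)} {η : Amb d →ₗ[ℝ] ℝ} (h : NormalOf Q E η)
    {x y : Amb d} (hx : x ∈ E) (hy : y ∈ Q) (hyE : y ∉ E) : η y < η x := by
  rcases lt_or_ge (η y) (η x) with h' | h'
  · exact h'
  · exfalso; apply hyE; rw [h]
    refine ⟨hy, fun z hz => le_trans (h.le hx hz) h'⟩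

lemma NormalOf.smulNormal {Q E : Set (Amb d)} {η : Amb d →ₗ[ℝ] ℝ} (h : NormalOf Q E η)
    {c : ℝ} (hc : 0 < c) : NormalOf Q E (c • η) := by
  rw [h]; unfold NormalOf; ext x
  simp only [Set.mem_setOf_eq, LinearMap.smul_apply, smul_eq_mul]
  exact and_congr Iff.rfl (forall_congr' fun y => imp_congr Iff.rfl (by
    constructor
    · intro h'; exact (mul_le_mul_iff_of_pos_left hc).mpr h'
    · intro h'; exact (mul_le_mul_iff_of_pos_left hc).mp h'))

lemma IsFaceOf.subset {Q F : Set (Amb d)} (h : IsFaceOf Q F) : F ⊆ Q := by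
  obtain ⟨φ, hφ⟩ := h; rw [hφ]; exact fun x hx => hx.1

lemma finrank_sup_span_singleton (p : Submodule ℝ (Amb d)) {v : Amb d} (hv : v ∉ p) :
    Module.finrank ℝ ↥(p ⊔ Submodule.span ℝ {v}) = Module.finrank ℝ p + 1 := by
  have hv0 : v ≠ 0 := fun h => hv (h ▸ p.zero_mem)
  have hinf : p ⊓ Submodule.span ℝ {v} = ⊥ := by
    rw [eq_bot_iff]
    intro x hx
    rw [Submodule.mem_inf] at hx
    obtain ⟨hxp, hxs⟩ := hx
    rw [Submodule.mem_span_singleton] at hxs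
    obtain ⟨c, rfl⟩ := hxs
    rcases eq_or_ne c 0 with rfl | hc
    · simp
    · exfalso; apply hv
      have : v = c⁻¹ • (c • v) := by rw [smul_smul, inv_mul_cancel₀ hc, one_smul]
      rw [this]; exact p.smul_mem _ hxp
  have h2 := Submodule.finrank_sup_add_finrank_inf_eq p (Submodule.span ℝ {v})
  rw [hinf, finrank_span_singleton hv0] at h2
  simpa using h2
end Helpers

section Key
variable {d : ℕ}

set_option maxHeartbeats 1000000 in
lemma key (hd : 2 ≤ d) {P : Set (Amb d)} {B : Module.Basis (Fin d) ℝ (Amb d)}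
    (hB : Admissible P B) {F₁ F₂ G : Set (Amb d)} {η₁ η₂ : Amb d →ₗ[ℝ] ℝ}
    (hN₁ : NormalOf P F₁ η₁) (hN₂ : NormalOf P F₂ η₂)
    (hn₁ : η₁ (fvec B (d-1)) = 1) (hn₂ : η₂ (fvec B (d-1)) = 1)
    (hdF₁ : fdim F₁ = d-1)
    (hT : InKTarget B (d-2) F₁ G) (hS : InKSource B (d-2) F₂ G) :
    η₁ (fvec B (d-2)) < η₂ (fvec B (d-2)) := by
  obtain ⟨hGF₁, hGne, hGdim, μ, hμN, hμv⟩ := hT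
  obtain ⟨hGF₂, -, -, ν, hνN, hνv⟩ := hS
  have hk : d - 2 + 1 = d - 1 := by omega
  rw [hk] at hμN hνN
  set π := proj B (d-1) with hπ
  have hlast : d - 1 < d := by omega
  have hpen : d - 2 < d := by omega
  have hfv1 : fvec B (d-1) = B ⟨d-1, hlast⟩ := by unfold fvec; rw [dif_pos hlast]
  have hfv2 : fvec B (d-2) = B ⟨d-2, hpen⟩ := by unfold fvec; rw [dif_pos hpen]
  set v : Amb d := B ⟨d-2, hpen⟩ with hv
  rw [hfv2] at hμv hνv ⊢
  rw [hfv1] at hn₁ hn₂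
  have hGsub₁ : G ⊆ F₁ := hGF₁.subset
  have hGsub₂ : G ⊆ F₂ := hGF₂.subset
  have hF₁P : F₁ ⊆ P := hN₁.subset
  obtain ⟨g0, hg0⟩ := hGne
  -- injectivity of π on linSpan F₁ and linSpan G
  have hinj : ∀ w ∈ linSpan F₁, π w = 0 → w = 0 := by
    have h := hB F₁ ⟨η₁, hN₁⟩ ⟨g0, hGsub₁ hg0⟩
    rwa [hdF₁] at h
  have hinjG : ∀ w ∈ linSpan G, π w = 0 → w = 0 :=
    fun w hw => hinj w (linSpan_mono hGsub₁ hw)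
  set L1 := (linSpan F₁).map π with hL1
  set LG := (linSpan G).map π with hLG
  have hL1rank : Module.finrank ℝ L1 = d - 1 := by
    rw [finrank_map_of_injOn π _ hinj]; exact hdF₁
  have hLGrank : Module.finrank ℝ LG = d - 2 := by
    rw [finrank_map_of_injOn π _ hinjG]; exact hGdim
  set K := LinearMap.ker (B.coord ⟨d-1, hlast⟩) with hKdef
  have hcoordπ : ∀ x, B.coord ⟨d-1, hlast⟩ (π x) = 0 := by
    have hc : (B.coord ⟨d-1, hlast⟩).comp π = 0 := by
      apply B.ext; intro i
      by_cases hi : (i : ℕ) < d - 1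
      · have hne : i ≠ ⟨d-1, hlast⟩ := Fin.ne_of_val_ne (by simpa using Nat.ne_of_lt hi)
        simp [LinearMap.comp_apply, hπ, proj_basis, hi, Module.Basis.coord_apply,
          Module.Basis.repr_self, Finsupp.single_apply, hne]
      · simp [LinearMap.comp_apply, hπ, proj_basis, hi]
    intro x
    simpa using LinearMap.ext_iff.mp hc x
  have hAd : Module.finrank ℝ (Amb d) = d := by simp
  have hKrank : Module.finrank ℝ K = d - 1 := by
    have h1 := LinearMap.finrank_range_add_finrank_ker (B.coord ⟨d-1, hlast⟩)
    have h2 : LinearMap.range (B.coord ⟨d-1, hlast⟩) = ⊤ := by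
      rw [LinearMap.range_eq_top]
      intro r
      refine ⟨r • B ⟨d-1, hlast⟩, ?_⟩
      simp [Module.Basis.coord_apply, Module.Basis.repr_self]
    rw [h2, hAd] at h1
    simp at h1
    rw [hKdef]
    omega
  have hL1le : L1 ≤ K := by
    rintro y ⟨x, -, rfl⟩
    exact LinearMap.mem_ker.2 (hcoordπ x)
  have hL1eq : L1 = K := Submodule.eq_of_le_of_finrank_le hL1le (by rw [hL1rank, hKrank])
  have hvK : v ∈ K := by
    have hne : (⟨d-2, hpen⟩ : Fin d) ≠ ⟨d-1, hlast⟩ := Fin.ne_of_val_ne (by simp; omega)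
    simp [hKdef, LinearMap.mem_ker, hv, Module.Basis.coord_apply, Module.Basis.repr_self,
      Finsupp.single_apply, hne]
  have hμLG : ∀ w ∈ LG, μ w = 0 := by
    intro w hw
    exact hμN.vanish (by rw [linSpan_image]; exact hw)
  have hvLG : v ∉ LG := fun h => absurd (hμLG v h) (ne_of_gt hμv)
  have hLGle : LG ≤ K := le_trans (Submodule.map_mono (linSpan_mono hGsub₁)) (le_of_eq hL1eq)
  have hsupK : LG ⊔ Submodule.span ℝ {v} = K := by
    apply Submodule.eq_of_le_of_finrank_le
      (sup_le hLGle (Submodule.span_le.2 (Set.singleton_subset_iff.2 hvK)))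
    rw [hKrank, finrank_sup_span_singleton LG hvLG, hLGrank]
    omega
  -- pick p in F₁ whose projection avoids π '' G
  have himne : π '' G ≠ π '' F₁ := by
    intro h
    apply hvLG
    have hEq : LG = L1 := by rw [hLG, hL1, ← linSpan_image, ← linSpan_image, h]
    rw [hEq, hL1eq]
    exact hvK
  obtain ⟨p', hp'F, hp'G⟩ :=
    Set.exists_of_ssubset (HasSubset.Subset.ssubset_of_ne (Set.image_mono hGsub₁) himne)
  obtain ⟨p, hpF₁, rfl⟩ := hp'F
  have hg'G : π g0 ∈ π '' G := ⟨g0, hg0, rfl⟩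
  have hμstrict : μ (π p) < μ (π g0) := hμN.strict hg'G ⟨p, hpF₁, rfl⟩ hp'G
  -- decompose the difference
  have hdiff : π g0 - π p ∈ LG ⊔ Submodule.span ℝ {v} := by
    rw [hsupK, ← hL1eq]
    exact ⟨g0 - p, sub_mem_linSpan (hGsub₁ hg0) hpF₁, map_sub π g0 p⟩
  obtain ⟨u, hu, w, hw, huw⟩ := Submodule.mem_sup.1 hdiff
  obtain ⟨t, rfl⟩ := Submodule.mem_span_singleton.1 hw
  have hμeq : μ (π g0) - μ (π p) = t * μ v := by
    rw [← map_sub, ← huw, map_add, hμLG u hu, map_smul]; simp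
  have ht : 0 < t := by
    have hpos : 0 < t * μ v := by linarith
    by_contra hcontra
    push_neg at hcontra
    have : t * μ v ≤ 0 := mul_nonpos_iff.mpr (Or.inr ⟨hcontra, hμv.le⟩)
    linarith
  -- the difference covector
  set η := η₂ - η₁ with hη
  have hηπ : ∀ x, η (π x) = η x := by
    have hc : η.comp π = η := by
      apply B.ext; intro i
      by_cases hi : (i : ℕ) < d - 1
      · simp [LinearMap.comp_apply, hπ, proj_basis, hi]
      · have hieq : i = ⟨d-1, hlast⟩ := Fin.ext (by have := i.isLt; simp; omega)
        simp [LinearMap.comp_apply, hπ, proj_basis, hi, hieq, hη,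
          LinearMap.sub_apply, hn₁, hn₂]
    intro x; exact LinearMap.ext_iff.mp hc x
  have hηLG : ∀ w' ∈ LG, η w' = 0 := by
    rintro w' ⟨w'', hw'', rfl⟩
    have h1 : η₁ w'' = 0 := hN₁.vanish (linSpan_mono hGsub₁ hw'')
    have h2 : η₂ w'' = 0 := hN₂.vanish (linSpan_mono hGsub₂ hw'')
    rw [hηπ]
    simp [hη, LinearMap.sub_apply, h1, h2]
  have e1 : η₁ g0 = η₁ p :=
    le_antisymm (hN₁.le hpF₁ (hF₁P (hGsub₁ hg0))) (hN₁.le (hGsub₁ hg0) (hF₁P hpF₁))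
  have e2 : η₂ p ≤ η₂ g0 := hN₂.le (hGsub₂ hg0) (hF₁P hpF₁)
  have hηval : t * η v = η₂ g0 - η₂ p := by
    have ha : η (π g0 - π p) = t * η v := by
      rw [← huw, map_add, hηLG u hu, map_smul]; simp
    have hb : η (π g0 - π p) = η₂ g0 - η₂ p := by
      rw [map_sub, hηπ, hηπ]
      simp only [hη, LinearMap.sub_apply]
      rw [e1]; ring
    rw [← ha, hb]
  have hnn : 0 ≤ t * η v := by rw [hηval]; linarith
  -- conclude
  by_contra hcon
  push_neg at hcon
  have hηv0 : η v = 0 := by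
    have hle : η v ≤ 0 := by
      simp only [hη, LinearMap.sub_apply]
      linarith
    have h3 : t * η v ≤ 0 := mul_nonpos_iff.mpr (Or.inl ⟨ht.le, hle⟩)
    exact (mul_eq_zero.mp (le_antisymm h3 hnn)).resolve_left (ne_of_gt ht)
  -- then η vanishes identically, so F₁ = F₂
  have hηK : ∀ x ∈ K, η x = 0 := by
    intro x hx
    rw [← hsupK] at hx
    obtain ⟨u', hu', w', hw', huw'⟩ := Submodule.mem_sup.1 hx
    obtain ⟨t', rfl⟩ := Submodule.mem_span_singleton.1 hw'
    rw [← huw', map_add, hηLG u' hu', map_smul, hηv0]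
    simp
  have hvdK : B ⟨d-1, hlast⟩ ∉ K := by
    simp [hKdef, LinearMap.mem_ker, Module.Basis.coord_apply, Module.Basis.repr_self,
      Finsupp.single_eq_same]
  have htop : K ⊔ Submodule.span ℝ {B ⟨d-1, hlast⟩} = ⊤ := by
    apply Submodule.eq_top_of_finrank_eq
    rw [finrank_sup_span_singleton K hvdK, hKrank, hAd]
    omega
  have hηzero : ∀ x, η x = 0 := by
    intro x
    have hx : x ∈ K ⊔ Submodule.span ℝ {B ⟨d-1, hlast⟩} := htop ▸ Submodule.mem_top
    obtain ⟨u', hu', w', hw', huw'⟩ := Submodule.mem_sup.1 hx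
    obtain ⟨c, rfl⟩ := Submodule.mem_span_singleton.1 hw'
    have hηvd : η (B ⟨d-1, hlast⟩) = 0 := by
      simp [hη, LinearMap.sub_apply, hn₁, hn₂]
    rw [← huw', map_add, hηK u' hu', map_smul, hηvd]
    simp
  have heq12 : ∀ y, η₁ y = η₂ y := by
    intro y
    have h := hηzero y
    simp only [hη, LinearMap.sub_apply, sub_eq_zero] at h
    exact h.symm
  have hF12 : F₁ = F₂ := by
    rw [hN₁, hN₂]
    ext x
    simp only [Set.mem_setOf_eq]
    constructor
    · rintro ⟨hxP, hmax⟩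
      exact ⟨hxP, fun y hy => by rw [← heq12 y, ← heq12 x]; exact hmax y hy⟩
    · rintro ⟨hxP, hmax⟩
      exact ⟨hxP, fun y hy => by rw [heq12 y, heq12 x]; exact hmax y hy⟩
  rw [← hF12] at hνN
  have hνstrict : ν (π p) < ν (π g0) := hνN.strict hg'G ⟨p, hpF₁, rfl⟩ hp'G
  have hνLG : ∀ w' ∈ LG, ν w' = 0 := by
    intro w' hw'
    exact hνN.vanish (by rw [linSpan_image]; exact hw')
  have hνeq : ν (π g0) - ν (π p) = t * ν v := by
    rw [← map_sub, ← huw, map_add, hνLG u hu, map_smul]; simp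
  have hfin : t * ν v < 0 := mul_neg_of_pos_of_neg ht hνv
  linarith

lemma normal_unique (hd : 1 ≤ d) {P : Set (Amb d)} {B : Module.Basis (Fin d) ℝ (Amb d)}
    (hB : Admissible P B) {F : Set (Amb d)} {η η' : Amb d →ₗ[ℝ] ℝ}
    (hN : NormalOf P F η) (hN' : NormalOf P F η') (hne : F.Nonempty)
    (hdF : fdim F = d - 1)
    (hn : η (fvec B (d-1)) = 1) (hn' : η' (fvec B (d-1)) = 1) (x : Amb d) :
    η x = η' x := by
  have hlast : d - 1 < d := by omega
  have hfv : fvec B (d-1) = B ⟨d-1, hlast⟩ := by unfold fvec; rw [dif_pos hlast]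
  rw [hfv] at hn hn'
  have hvd : B ⟨d-1, hlast⟩ ∉ linSpan F := by
    intro hmem
    have hinj := hB F ⟨η, hN⟩ hne
    rw [hdF] at hinj
    have h0 : proj B (d-1) (B ⟨d-1, hlast⟩) = 0 := by rw [proj_basis]; simp
    exact B.ne_zero _ (hinj _ hmem h0)
  have hfr : Module.finrank ℝ (linSpan F) = d - 1 := hdF
  have htop : linSpan F ⊔ Submodule.span ℝ {B ⟨d-1, hlast⟩} = ⊤ := by
    apply Submodule.eq_top_of_finrank_eq
    have hAd : Module.finrank ℝ (Amb d) = d := by simp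
    rw [finrank_sup_span_singleton _ hvd, hfr, hAd]
    omega
  have hx : x ∈ linSpan F ⊔ Submodule.span ℝ {B ⟨d-1, hlast⟩} := htop ▸ Submodule.mem_top
  obtain ⟨u, hu, w, hw, huw⟩ := Submodule.mem_sup.1 hx
  obtain ⟨c, rfl⟩ := Submodule.mem_span_singleton.1 hw
  rw [← huw, map_add, map_add, map_smul, map_smul, hN.vanish hu, hN'.vanish hu, hn, hn']
end Key

theorem stmt17 (d : ℕ) (hd : 2 ≤ d) (S : Finset (Amb d)) (P : Set (Amb d))
    (hP : P = convexHull ℝ (S : Set (Amb d))) (hPdim : fdim P = d)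
    (B : Module.Basis (Fin d) ℝ (Amb d)) (hB : Admissible P B) :
    (∀ (F₁ F₂ : Set (Amb d)) (η₁ η₂ : Amb d →ₗ[ℝ] ℝ),
      InKTarget B (d-1) P F₁ → InKTarget B (d-1) P F₂ →
      NormalOf P F₁ η₁ → NormalOf P F₂ η₂ →
      η₁ (fvec B (d-1)) = 1 → η₂ (fvec B (d-1)) = 1 →
      fdim (F₁ ∩ F₂) = d - 2 →
      InKTarget B (d-2) F₁ (F₁ ∩ F₂) → InKSource B (d-2) F₂ (F₁ ∩ F₂) →
      η₁ (fvec B (d-2)) < η₂ (fvec B (d-2))) ∧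
    (∀ (m : ℕ) (Fs : Fin m → Set (Amb d)),
      (∀ i, InKTarget B (d-1) P (Fs i)) →
      IsCellString B P (d-2) Fs → Function.Injective Fs) := by
  constructor
  · intro F₁ F₂ η₁ η₂ hT₁ _hT₂ hN₁ hN₂ hn₁ hn₂ _hdim hT hS
    exact key hd hB hN₁ hN₂ hn₁ hn₂ hT₁.2.2.1 hT hS
  · intro m Fs hAll hCS
    have hd1 : d - 1 + 1 = d := by omega
    have hnorm : ∀ i : Fin m, ∃ η : Amb d →ₗ[ℝ] ℝ,
        NormalOf P (Fs i) η ∧ η (fvec B (d-1)) = 1 := by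
      intro i
      obtain ⟨_hf, _hne, _hdim, η, hη, hpos⟩ := hAll i
      rw [hd1, proj_d_id] at hη
      simp only [LinearMap.id_coe, Set.image_id] at hη
      refine ⟨(η (fvec B (d-1)))⁻¹ • η, hη.smulNormal (inv_pos.2 hpos), ?_⟩
      simp [LinearMap.smul_apply, inv_mul_cancel₀ (ne_of_gt hpos)]
    choose η hηN hηn using hnorm
    have hstep : ∀ (i : ℕ) (h : i + 1 < m),
        η ⟨i, by omega⟩ (fvec B (d-2)) < η ⟨i+1, h⟩ (fvec B (d-2)) := by
      intro i h
      obtain ⟨G, hGt, hGs⟩ := hCS.2 i h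
      exact key hd hB (hηN _) (hηN _) (hηn _) (hηn _) (hAll ⟨i, by omega⟩).2.2.1 hGt hGs
    have hmono : ∀ (k i : ℕ) (hk : i + k + 1 < m),
        η ⟨i, by omega⟩ (fvec B (d-2)) < η ⟨i + k + 1, hk⟩ (fvec B (d-2)) := by
      intro k
      induction k with
      | zero => intro i hk; exact hstep i hk
      | succ k ih =>
        intro i hk
        exact lt_trans (ih i (by omega)) (hstep (i + k + 1) hk)
    have hcontra : ∀ a b : Fin m, Fs a = Fs b → a < b → False := by
      intro a b hab hlt
      have hvlt : (a : ℕ) < (b : ℕ) := hlt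
      have hk : (a : ℕ) + ((b : ℕ) - (a : ℕ) - 1) + 1 < m := by omega
      have hm := hmono ((b : ℕ) - (a : ℕ) - 1) (a : ℕ) hk
      have ea : (⟨(a : ℕ), by omega⟩ : Fin m) = a := rfl
      have eb : (⟨(a : ℕ) + ((b : ℕ) - (a : ℕ) - 1) + 1, hk⟩ : Fin m) = b :=
        Fin.ext (by simp; omega)
      rw [ea, eb] at hm
      have huniq : η a (fvec B (d-2)) = η b (fvec B (d-2)) :=
        normal_unique (by omega) hB (show NormalOf P (Fs b) (η a) by rw [← hab]; exact hηN a)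
          (hηN b) (hAll b).2.1 (hAll b).2.2.1 (hηn a) (hηn b) _
      linarith
    intro a b hab
    by_contra hne
    rcases lt_or_gt_of_ne hne with h | h
    · exact hcontra a b hab h
    · exact hcontra b a hab.symm h
end
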